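/- For every n ≥ 3, the wreath graph W_n = C_n[2K_1] (the lexicographic product of the n-cycle with the edgeless graph on 2 vertices) has distinguishing number strictly greater than 2. -/

import Mathlib

open SimpleGraph

/-- A colouring `c` of the vertices of `G` is distinguishing if the only
colour-preserving automorphism of `G` is the identity. -/
def IsDistinguishing {V : Type*} (G : SimpleGraph V) {k : ℕ} (c : V → Fin k) : Prop :=
  ∀ γ : G ≃g G, (∀ v, c (γ v) = c v) → ∀ v, γ v = v

/-- The distinguishing number of a finite graph `G`. -/
noncomputable def distinguishingNumber {V : Type*} [Fintype V] (G : SimpleGraph V) : ℕ :=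
  sInf {k | ∃ c : V → Fin k, IsDistinguishing G c}

/-- The wreath graph \`W_n = C_n[2K_1]\`: vertices are pairs \`(i, a)\` with
\`i : ZMod n\`, \`a : Fin 2\`, and \`(i, a)\` is adjacent to \`(j, b)\` iff \`i\` and \`j\`
are consecutive modulo \`n\`. -/
def wreathGraph (n : ℕ) : SimpleGraph (ZMod n × Fin 2) :=
  SimpleGraph.fromRel (fun p q => p.1 + 1 = q.1)

lemma wreath_one_ne_zero (n : ℕ) [NeZero n] (hn : 3 ≤ n) : (1 : ZMod n) ≠ 0 := by
  intro h
  have hdvd : (n : ℕ) ∣ 1 :=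
    (ZMod.natCast_eq_zero_iff 1 n).mp (by exact_mod_cast h)
  have := Nat.le_of_dvd one_pos hdvd
  omega

lemma wreath_adj (n : ℕ) [NeZero n] (hn : 3 ≤ n) (p q : ZMod n × Fin 2) :
    (wreathGraph n).Adj p q ↔ (p.1 + 1 = q.1 ∨ q.1 + 1 = p.1) := by
  constructor
  · rintro ⟨-, h⟩; exact h
  · intro h
    refine ⟨?_, h⟩
    rcases h with h | h
    · intro he; rw [he] at h
      exact wreath_one_ne_zero n hn (by linear_combination h)
    · intro he; rw [he] at h
      exact wreath_one_ne_zero n hn (by linear_combination h)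

lemma not_distinguishing_two (n : ℕ) [NeZero n] (hn : 3 ≤ n)
    (c : ZMod n × Fin 2 → Fin 2) : ¬ IsDistinguishing (wreathGraph n) c := by
  intro hd
  have h01 : ∀ a : Fin 2, a = 0 ∨ a = 1 := by decide
  by_cases hmono : ∃ i, c (i, 0) = c (i, 1)
  · obtain ⟨i0, hi0⟩ := hmono
    have key : ∀ a : Fin 2, a + 1 + 1 = a := by decide
    set f : ZMod n × Fin 2 → ZMod n × Fin 2 :=
      fun p => (p.1, if p.1 = i0 then p.2 + 1 else p.2) with hf
    have hinv : Function.Involutive f := by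
      rintro ⟨i, a⟩
      by_cases h : i = i0
      · simp [hf, h, key]
      · simp [hf, h]
    let γ : wreathGraph n ≃g wreathGraph n :=
      { toEquiv := hinv.toPerm
        map_rel_iff' := by
          intro p q
          simp [hinv.coe_toPerm, wreath_adj n hn, hf] }
    have hcc : ∀ a : Fin 2, c (i0, a + 1) = c (i0, a) := by
      intro a
      rcases h01 a with rfl | rfl
      · exact hi0.symm
      · rw [show (1 : Fin 2) + 1 = 0 by decide]
        exact hi0
    have hpres : ∀ v, c (γ v) = c v := by
      rintro ⟨i, a⟩
      show c (f (i, a)) = c (i, a)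
      by_cases h : i = i0
      · rw [show f (i, a) = (i0, a + 1) by simp [hf, h], h]
        exact hcc a
      · simp [hf, h]
    have h2 : f (i0, 0) = (i0, 0) := hd γ hpres (i0, 0)
    simp [hf] at h2
  · push_neg at hmono
    set s : ZMod n → Fin 2 := fun i => c (i, 0) with hs
    have hflip : ∀ x y : Fin 2, x ≠ y → y = x + 1 := by decide
    have hc : ∀ i a, c (i, a) = s i + a := by
      intro i a
      rcases h01 a with rfl | rfl
      · simp [hs]
      · simpa [hs] using hflip _ _ (hmono i)
    set f : ZMod n × Fin 2 → ZMod n × Fin 2 :=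
      fun p => (-p.1, p.2 + (s p.1 + s (-p.1))) with hf
    have key : ∀ a x y : Fin 2, a + (x + y) + (y + x) = a := by decide
    have hinv : Function.Involutive f := by
      intro p
      simp only [hf, neg_neg]
      exact Prod.ext rfl (key _ _ _)
    let γ : wreathGraph n ≃g wreathGraph n :=
      { toEquiv := hinv.toPerm
        map_rel_iff' := by
          intro p q
          simp only [Function.Involutive.coe_toPerm, wreath_adj n hn, hf]
          constructor
          · rintro (h | h)
            · exact Or.inr (by linear_combination h)
            · exact Or.inl (by linear_combination h)
          · rintro (h | h)
            · exact Or.inr (by linear_combination h)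
            · exact Or.inl (by linear_combination h) }
    have key2 : ∀ a x y : Fin 2, y + (a + (x + y)) = x + a := by decide
    have hpres : ∀ v, c (γ v) = c v := by
      rintro ⟨i, a⟩
      show c (f (i, a)) = c (i, a)
      rw [hf]
      simp only
      rw [hc, hc]
      exact key2 _ _ _
    have h2 : f (1, 0) = (1, 0) := hd γ hpres (1, 0)
    have h3 : (-1 : ZMod n) = 1 := congrArg Prod.fst h2
    have h4 : ((2 : ℕ) : ZMod n) = 0 := by push_cast; linear_combination -h3
    have hdvd := (ZMod.natCast_eq_zero_iff 2 n).mp h4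
    have := Nat.le_of_dvd two_pos hdvd
    omega

theorem two_lt_distinguishingNumber_wreathGraph (n : ℕ) [NeZero n] (hn : 3 ≤ n) :
    2 < distinguishingNumber (wreathGraph n) := by
  classical
  have hne : {k | ∃ c : ZMod n × Fin 2 → Fin k,
      IsDistinguishing (wreathGraph n) c}.Nonempty := by
    refine ⟨Fintype.card (ZMod n × Fin 2), (Fintype.equivFin _ : _), ?_⟩
    intro γ h v
    exact (Fintype.equivFin _).injective (h v)
  by_contra hle
  push_neg at hle
  have hmem : distinguishingNumber (wreathGraph n) ∈ _ := Nat.sInf_mem hne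
  obtain ⟨c, hc⟩ := hmem
  have hcast : IsDistinguishing (wreathGraph n)
      (fun v => Fin.castLE hle (c v) : ZMod n × Fin 2 → Fin 2) := by
    intro γ h v
    exact hc γ (fun w => Fin.castLE_injective hle (h w)) v
  exact not_distinguishing_two n hn _ hcast
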